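/- arXiv:math/0606622 — 2 statements merged into one kernel-verified Lean document; each statement's English description precedes it below -/
import Mathlib

section
/- The function ρ is twice continuously differentiable on ℝ, with ρ′(x) = −∫_ℝ h′(y−x) h(y) dy and ρ″(x) = −∫_ℝ h′(y−x) h′(y) dy for all x ∈ ℝ; consequently |ρ″(x)| ≤ ∫_ℝ h′(y)² dy for all x, and ρ″(0) = −∫_ℝ h′(y)² dy. -/
open MeasureTheory
open Filter
open scoped ENNReal

noncomputable section

lemma mpTrans (t : ℝ) : MeasurePreserving (fun y : ℝ => y - t) volume volume :=
  measurePreserving_sub_right volume t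

lemma memTrans {f : ℝ → ℝ} (hf : MemLp f 2 (volume : Measure ℝ)) (t : ℝ) :
    MemLp (fun y => f (y - t)) 2 (volume : Measure ℝ) :=
  hf.comp_measurePreserving (mpTrans t)

lemma intMul {f g : ℝ → ℝ} (hf : MemLp f 2 (volume : Measure ℝ))
    (hg : MemLp g 2 (volume : Measure ℝ)) :
    Integrable (fun y => f y * g y) volume := by
  have h2 : (1 : ℝ≥0∞) / 1 = 1 / 2 + 1 / 2 := by
    rw [ENNReal.div_add_div_same]; norm_num
    rw [ENNReal.div_self two_ne_zero ENNReal.ofNat_ne_top]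
  have := (hg.smul hf : MemLp (f • g) 1 volume)
  rw [memLp_one_iff_integrable] at this
  exact this

lemma conj22 : Real.HolderConjugate 2 2 := by constructor <;> norm_num

lemma holderBound {f g : ℝ → ℝ} (hf : MemLp f 2 (volume : Measure ℝ))
    (hg : MemLp g 2 (volume : Measure ℝ)) :
    ∫ y, ‖f y‖ * ‖g y‖ ≤
      (∫ y, ‖f y‖ ^ (2:ℝ)) ^ ((1:ℝ)/2) * (∫ y, ‖g y‖ ^ (2:ℝ)) ^ ((1:ℝ)/2) := by
  have := integral_mul_norm_le_Lp_mul_Lq (μ := volume) conj22 (by simpa using hf)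
    (by simpa using hg)
  simpa using this

lemma prodInt {φ g : ℝ → ℝ} (hφc : Continuous φ) (hφ : MemLp φ 2 (volume : Measure ℝ))
    (hgc : Continuous g) (hg : MemLp g 2 (volume : Measure ℝ)) (a b : ℝ) :
    Integrable (Function.uncurry fun y t => φ (y - t) * g y)
      ((volume : Measure ℝ).prod ((volume : Measure ℝ).restrict (Set.Ioc a b))) := by
  have hcont : Continuous (Function.uncurry fun y t : ℝ => φ (y - t) * g y) := by
    apply Continuous.mul
    · exact hφc.comp (continuous_fst.sub continuous_snd)
    · exact hgc.comp continuous_fst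
  rw [integrable_prod_iff' hcont.aestronglyMeasurable]
  refine ⟨Filter.Eventually.of_forall fun t => intMul (memTrans hφ t) hg, ?_⟩
  set C : ℝ := (∫ y, ‖φ y‖ ^ (2:ℝ)) ^ ((1:ℝ)/2) * (∫ y, ‖g y‖ ^ (2:ℝ)) ^ ((1:ℝ)/2) with hC
  refine Integrable.mono' (g := fun _ => C)
    (integrableOn_const measure_Ioc_lt_top.ne enorm_ne_top)
    (hcont.stronglyMeasurable.norm.integral_prod_left'.aestronglyMeasurable.restrict) ?_
  refine Filter.Eventually.of_forall fun t => ?_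
  have h0 : (0:ℝ) ≤ ∫ y, ‖Function.uncurry (fun y t : ℝ => φ (y - t) * g y) (y, t)‖ :=
    integral_nonneg fun y => norm_nonneg _
  rw [Real.norm_of_nonneg h0]
  have h1 : ∀ y : ℝ, ‖Function.uncurry (fun y t : ℝ => φ (y - t) * g y) (y, t)‖
      = ‖φ (y - t)‖ * ‖g y‖ := fun y => norm_mul _ _
  rw [integral_congr_ae (Filter.Eventually.of_forall h1)]
  calc ∫ y, ‖φ (y - t)‖ * ‖g y‖
      ≤ (∫ y, ‖φ (y - t)‖ ^ (2:ℝ)) ^ ((1:ℝ)/2) * (∫ y, ‖g y‖ ^ (2:ℝ)) ^ ((1:ℝ)/2) :=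
        holderBound (memTrans hφ t) hg
    _ = C := by
        rw [hC]
        congr 1
        congr 1
        exact integral_sub_right_eq_self (fun y => ‖φ y‖ ^ (2:ℝ)) t

lemma contCorr {f g : ℝ → ℝ} (hf : MemLp f 2 (volume : Measure ℝ))
    (hg : MemLp g 2 (volume : Measure ℝ)) :
    Continuous (fun x : ℝ => ∫ y, f (y - x) * g y) := by
  set F : Lp ℝ 2 (volume : Measure ℝ) := hf.toLp f with hF
  set G : Lp ℝ 2 (volume : Measure ℝ) := hg.toLp g with hG
  have key : ∀ x : ℝ, ∫ y, f (y - x) * g y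
      = (inner ℝ (Lp.compMeasurePreserving (fun y => y - x) (mpTrans x) F) G : ℝ) := by
    intro x
    rw [MeasureTheory.L2.inner_def]
    refine (integral_congr_ae ?_).symm
    have h1 : (Lp.compMeasurePreserving (fun y => y - x) (mpTrans x) F : ℝ → ℝ)
        =ᵐ[volume] (F : ℝ → ℝ) ∘ (fun y => y - x) :=
      Lp.coeFn_compMeasurePreserving F (mpTrans x)
    have h2 : ((F : ℝ → ℝ) ∘ (fun y => y - x)) =ᵐ[volume] (f ∘ (fun y => y - x)) :=
      (mpTrans x).quasiMeasurePreserving.ae_eq_comp (hf.coeFn_toLp)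
    have h3 : (G : ℝ → ℝ) =ᵐ[volume] g := hg.coeFn_toLp
    filter_upwards [h1, h2, h3] with y hy1 hy2 hy3
    simp only [RCLike.inner_apply, conj_trivial, hy1, hy3]
    rw [hy2]; exact mul_comm _ _
  have cont : Continuous fun x : ℝ =>
      (inner ℝ (Lp.compMeasurePreserving (fun y => y - x) (mpTrans x) F) G : ℝ) := by
    refine Continuous.inner ?_ continuous_const
    rw [continuous_iff_continuousAt]
    intro x
    exact Filter.Tendsto.compMeasurePreservingLp (tendsto_const_nhds (x := F))
      ((ContinuousMap.mk (fun p : ℝ × ℝ => p.2 - p.1) (by continuity)).curry.continuous.tendsto x)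
      (fun a => mpTrans a) (mpTrans x) (by norm_num)
  exact cont.congr fun x => (key x).symm

lemma derivCorr {h g : ℝ → ℝ} (hc : ContDiff ℝ 1 h)
    (hh : MemLp h 2 (volume : Measure ℝ)) (hh' : MemLp (deriv h) 2 (volume : Measure ℝ))
    (hgc : Continuous g) (hg : MemLp g 2 (volume : Measure ℝ)) (x : ℝ) :
    HasDerivAt (fun x : ℝ => ∫ y, h (y - x) * g y) (-∫ y, deriv h (y - x) * g y) x := by
  have hc' : Continuous (deriv h) := hc.continuous_deriv le_rfl
  set F : ℝ → ℝ := fun x => ∫ y, h (y - x) * g y with hFdef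
  set K : ℝ → ℝ := fun t => ∫ y, deriv h (y - t) * g y with hKdef
  have Kcont : Continuous K := contCorr hh' hg
  -- main identity
  have main : ∀ a b : ℝ, a ≤ b → F b - F a = -∫ t in Set.Ioc a b, K t := by
    intro a b hab
    have hIab : ∀ c : ℝ, Integrable (fun y => h (y - c) * g y) volume :=
      fun c => intMul (memTrans hh c) hg
    have step1 : F b - F a = ∫ y, (h (y - b) - h (y - a)) * g y := by
      rw [hFdef]
      simp only
      rw [← integral_sub (hIab b) (hIab a)]
      congr 1; funext y; ring
    have step2 : ∀ y : ℝ, (h (y - b) - h (y - a)) * g y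
        = -∫ t in Set.Ioc a b, deriv h (y - t) * g y := by
      intro y
      have hderiv : ∀ t ∈ Set.uIcc a b, HasDerivAt (fun t => h (y - t))
          (-(deriv h (y - t))) t := by
        intro t _
        have h1 : HasDerivAt (fun t : ℝ => y - t) (-1) t := by
          simpa using (hasDerivAt_id t).const_sub y
        have h2 : HasDerivAt h (deriv h (y - t)) (y - t) :=
          ((hc.differentiable one_ne_zero) (y - t)).hasDerivAt
        exact (h2.comp t h1).congr_deriv (by ring)
      have hint : IntervalIntegrable (fun t => -(deriv h (y - t))) volume a b :=
        ((hc'.comp (continuous_const.sub continuous_id)).neg).intervalIntegrable a b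
      have := intervalIntegral.integral_eq_sub_of_hasDerivAt hderiv hint
      -- this : ∫ t in a..b, -(deriv h (y - t)) = h (y - b) - h (y - a)
      rw [← this, intervalIntegral.integral_of_le hab]
      rw [integral_neg, neg_mul, neg_inj, ← integral_mul_const]
    have step3 : F b - F a = -∫ y, ∫ t in Set.Ioc a b, deriv h (y - t) * g y := by
      calc F b - F a = ∫ y, (h (y - b) - h (y - a)) * g y := step1
        _ = ∫ y, -(∫ t in Set.Ioc a b, deriv h (y - t) * g y) :=
            integral_congr_ae (Filter.Eventually.of_forall step2)
        _ = -∫ y, ∫ t in Set.Ioc a b, deriv h (y - t) * g y := integral_neg _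
    rw [step3, neg_inj]
    have swap := integral_integral_swap (μ := (volume : Measure ℝ))
      (ν := (volume : Measure ℝ).restrict (Set.Ioc a b))
      (f := fun y t => deriv h (y - t) * g y) (prodInt hc' hh' hgc hg a b)
    rw [swap]
  -- F equals the antiderivative expression
  have Feq : ∀ z : ℝ, F z = F 0 - ∫ t in (0:ℝ)..z, K t := by
    intro z
    rcases le_or_gt 0 z with hz | hz
    · have := main 0 z hz
      rw [intervalIntegral.integral_of_le hz]
      linarith [this]
    · have := main z 0 hz.le
      rw [intervalIntegral.integral_symm, intervalIntegral.integral_of_le hz.le]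
      linarith [this]
  have hW : HasDerivAt (fun z : ℝ => F 0 - ∫ t in (0:ℝ)..z, K t) (-K x) x := by
    have := (Kcont.integral_hasStrictDerivAt 0 x).hasDerivAt
    simpa using this.const_sub (F 0)
  exact (hW.congr_of_eventuallyEq (Filter.Eventually.of_forall Feq)).congr_deriv rfl

end

/-- If `h` is continuously differentiable with `h, h' ∈ L²(ℝ)`, then
`ρ(x) = ∫ h(y-x) h(y) dy` is twice continuously differentiable with
`ρ' x = -∫ h'(y-x) h(y) dy` and `ρ'' x = -∫ h'(y-x) h'(y) dy`; consequently
`|ρ'' x| ≤ ∫ h'(y)² dy` for all `x`, and `ρ'' 0 = -∫ h'(y)² dy`. -/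
theorem stmt_3 (h : ℝ → ℝ) (hc : ContDiff ℝ 1 h)
    (hh : MemLp h 2 (volume : Measure ℝ))
    (hh' : MemLp (deriv h) 2 (volume : Measure ℝ))
    (ρ : ℝ → ℝ) (hρ : ∀ x, ρ x = ∫ y, h (y - x) * h y) :
    ContDiff ℝ 2 ρ ∧
    (∀ x : ℝ, deriv ρ x = -∫ y, deriv h (y - x) * h y) ∧
    (∀ x : ℝ, deriv (deriv ρ) x = -∫ y, deriv h (y - x) * deriv h y) ∧
    (∀ x : ℝ, |deriv (deriv ρ) x| ≤ ∫ y, (deriv h y) ^ 2) ∧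
    deriv (deriv ρ) 0 = -∫ y, (deriv h y) ^ 2 := by
  have hc' : Continuous (deriv h) := hc.continuous_deriv le_rfl
  set K₁ : ℝ → ℝ := fun x => ∫ y, deriv h (y - x) * h y with hK₁
  set K₂ : ℝ → ℝ := fun x => ∫ y, deriv h (y - x) * deriv h y with hK₂
  have hρfun : ρ = fun x => ∫ y, h (y - x) * h y := funext hρ
  have hd1 : ∀ x, HasDerivAt ρ (-(K₁ x)) x := by
    intro x; rw [hρfun]; exact derivCorr hc hh hh' hc.continuous hh x
  have hderivρ : deriv ρ = fun x => -(K₁ x) := funext fun x => (hd1 x).deriv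
  have hK₁d : ∀ x, HasDerivAt K₁ (K₂ x) x := by
    intro x
    have hΨ := derivCorr hc hh hh' hc' hh' (-x)
    have hneg : HasDerivAt (fun x : ℝ => -x) (-1) x := (hasDerivAt_id x).neg
    have hcomp := hΨ.comp x hneg
    have hfun : ((fun w => ∫ z, h (z - w) * deriv h z) ∘ fun x : ℝ => -x) = K₁ := by
      funext u
      show ∫ z, h (z - -u) * deriv h z = K₁ u
      rw [hK₁]
      simp only
      rw [← integral_add_right_eq_self (fun y => deriv h (y - u) * h y) u]
      refine integral_congr_ae (Filter.Eventually.of_forall fun z => ?_)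
      simp only [sub_neg_eq_add, add_sub_cancel_right]
      ring
    have hval : (-∫ z, deriv h (z - -x) * deriv h z) * (-1) = K₂ x := by
      rw [mul_neg_one, neg_neg, hK₂]
      simp only
      rw [← integral_add_right_eq_self (fun y => deriv h (y - x) * deriv h y) x]
      refine integral_congr_ae (Filter.Eventually.of_forall fun z => ?_)
      simp only [sub_neg_eq_add, add_sub_cancel_right]
      ring
    rw [hfun] at hcomp
    rw [← hval]
    exact hcomp
  have hderiv2 : ∀ x, deriv (deriv ρ) x = -(K₂ x) := by
    intro x
    rw [hderivρ]
    exact ((hK₁d x).neg).deriv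
  have hK₂cont : Continuous K₂ := contCorr hh' hh'
  have hcd2 : ContDiff ℝ 2 ρ := by
    rw [show (2 : WithTop ℕ∞) = 1 + 1 by norm_num, contDiff_succ_iff_deriv]
    refine ⟨fun x => (hd1 x).differentiableAt, by simp, ?_⟩
    rw [hderivρ, contDiff_one_iff_deriv]
    constructor
    · exact fun x => ((hK₁d x).neg).differentiableAt
    · have : deriv (fun x => -(K₁ x)) = fun x => -(K₂ x) :=
        funext fun x => ((hK₁d x).neg).deriv
      rw [this]
      exact hK₂cont.neg
  set I : ℝ := ∫ y, ‖deriv h y‖ ^ (2:ℝ) with hI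
  have hInn : (0:ℝ) ≤ I := integral_nonneg fun y => Real.rpow_nonneg (norm_nonneg _) _
  have hfinal : I = ∫ y, (deriv h y) ^ 2 := by
    refine integral_congr_ae (Filter.Eventually.of_forall fun y => ?_)
    simp only
    rw [show (2:ℝ) = ((2:ℕ):ℝ) by norm_num, Real.rpow_natCast]
    simp [sq_abs]
  have hbound : ∀ x, |deriv (deriv ρ) x| ≤ ∫ y, (deriv h y) ^ 2 := by
    intro x
    rw [hderiv2 x, abs_neg]
    have h1 : |K₂ x| ≤ ∫ y, ‖deriv h (y - x)‖ * ‖deriv h y‖ := by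
      rw [hK₂]
      show |∫ y, deriv h (y - x) * deriv h y| ≤ _
      rw [← Real.norm_eq_abs]
      refine (norm_integral_le_integral_norm _).trans_eq ?_
      exact integral_congr_ae (Filter.Eventually.of_forall fun y => norm_mul _ _)
    have htrans : ∫ y, ‖deriv h (y - x)‖ ^ (2:ℝ) = I :=
      integral_sub_right_eq_self (fun y => ‖deriv h y‖ ^ (2:ℝ)) x
    have h2 : ∫ y, ‖deriv h (y - x)‖ * ‖deriv h y‖ ≤ I ^ ((1:ℝ)/2) * I ^ ((1:ℝ)/2) := by
      have := holderBound (memTrans hh' x) hh'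
      rwa [htrans] at this
    have hIsq : I ^ ((1:ℝ)/2) * I ^ ((1:ℝ)/2) = I := by
      rw [← Real.rpow_add' hInn (by norm_num)]
      norm_num
    calc |K₂ x| ≤ ∫ y, ‖deriv h (y - x)‖ * ‖deriv h y‖ := h1
      _ ≤ I ^ ((1:ℝ)/2) * I ^ ((1:ℝ)/2) := h2
      _ = I := hIsq
      _ = ∫ y, (deriv h y) ^ 2 := hfinal
  refine ⟨hcd2, fun x => ?_, fun x => ?_, hbound, ?_⟩
  · rw [hderivρ]
  · rw [hderiv2 x]
  · rw [hderiv2 0, neg_inj, hK₂]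
    simp only
    refine integral_congr_ae (Filter.Eventually.of_forall fun y => ?_)
    simp [sub_zero, sq]
end

section
/- There exists an integer k₀ ≥ 3 (depending only on sup_x |b(x)| and sup_x σ(x)) such that for every integer k ≥ k₀ and every x ∈ ℝ, the numbers p₀^{(k)}(x), p₂^{(k)}(x) and p_k^{(k)}(x) all lie in the interval [0, 1]; in particular {p₀^{(k)}(x), p₂^{(k)}(x), p_k^{(k)}(x)} is a probability distribution (the offspring distribution placing mass on 0, 2 and k children). -/
section aux
variable {s t σx C C' : ℝ}

lemma aux_basic (hC0 : 0 ≤ C) (hC'0 : 0 ≤ C') (hs : 8*(C+C'+1) ≤ s)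
    (hts1 : t*s ≤ C) (hts2 : -C ≤ t*s) :
    8 ≤ s ∧ -(1/8 : ℝ) ≤ t ∧ t ≤ 1/8 := by
  have hs8 : (8:ℝ) ≤ s := by nlinarith
  have hs0 : (0:ℝ) < s := by linarith
  constructor
  · exact hs8
  constructor
  · nlinarith
  · nlinarith

lemma aux_D (hs8 : 8 ≤ s) : 0 < 2*(s*s-1)^2 - s*s := by
  nlinarith [mul_nonneg (by linarith : (0:ℝ) ≤ s - 8) (by linarith : (0:ℝ) ≤ s),
    mul_nonneg (mul_nonneg (by linarith : (0:ℝ) ≤ s - 8) (by linarith : (0:ℝ) ≤ s)) (by linarith : (0:ℝ) ≤ s),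
    mul_nonneg (mul_nonneg (mul_nonneg (by linarith : (0:ℝ) ≤ s - 8) (by linarith : (0:ℝ) ≤ s)) (by linarith : (0:ℝ) ≤ s)) (by linarith : (0:ℝ) ≤ s)]

lemma aux_Nk0 (hs8 : 8 ≤ s) (ht : -(1/8:ℝ) ≤ t) (hσ1 : 0 ≤ σx) :
    0 ≤ 2*(s*σx+1) - 1 + t := by
  nlinarith [mul_nonneg (by linarith : (0:ℝ) ≤ s) hσ1]

lemma aux_NkD (hs8 : 8 ≤ s) (ht : t ≤ 1/8) (hσ2 : σx ≤ C') (hC' : 8*C'+8 ≤ s)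
    (hσ1 : 0 ≤ σx) :
    2*(s*σx+1) - 1 + t ≤ 2*(s*s-1)^2 - s*s := by
  have h1 : s*σx ≤ s*(s/8) := by
    apply mul_le_mul_of_nonneg_left (by linarith) (by linarith)
  nlinarith [mul_nonneg (by linarith : (0:ℝ) ≤ s - 8) (by linarith : (0:ℝ) ≤ s),
    mul_nonneg (mul_nonneg (by linarith : (0:ℝ) ≤ s - 8) (by linarith : (0:ℝ) ≤ s)) (by linarith : (0:ℝ) ≤ s),
    mul_nonneg (mul_nonneg (mul_nonneg (by linarith : (0:ℝ) ≤ s - 8) (by linarith : (0:ℝ) ≤ s)) (by linarith : (0:ℝ) ≤ s)) (by linarith : (0:ℝ) ≤ s)]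

lemma aux_N20 (hs8 : 8 ≤ s) (ht : t ≤ 1/8) (hσ2 : σx ≤ C') (hC' : 8*C'+8 ≤ s) :
    0 ≤ (s*s-1)^2*(1-t) - (s*s)*(s*σx+1) := by
  have h1 : s*s*s*σx ≤ s*s*s*(s/8 - 1) :=
    mul_le_mul_of_nonneg_left (by linarith) (by positivity)
  have h2 : (s*s-1)^2 * (7/8 : ℝ) ≤ (s*s-1)^2 * (1 - t) :=
    mul_le_mul_of_nonneg_left (by linarith) (sq_nonneg _)
  nlinarith [mul_nonneg (mul_nonneg (by linarith : (0:ℝ) ≤ s - 8) (by linarith : (0:ℝ) ≤ s)) (by linarith : (0:ℝ) ≤ s),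
    mul_nonneg (mul_nonneg (mul_nonneg (by linarith : (0:ℝ) ≤ s - 8) (by linarith : (0:ℝ) ≤ s)) (by linarith : (0:ℝ) ≤ s)) (by linarith : (0:ℝ) ≤ s)]

lemma aux_N2D (hs8 : 8 ≤ s) (ht : -(1/8:ℝ) ≤ t) (hσ1 : 0 ≤ σx) :
    (s*s-1)^2*(1-t) - (s*s)*(s*σx+1) ≤ 2*(s*s-1)^2 - s*s := by
  have h2 : (s*s-1)^2 * (1 - t) ≤ (s*s-1)^2 * (9/8 : ℝ) :=
    mul_le_mul_of_nonneg_left (by linarith) (sq_nonneg _)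
  nlinarith [mul_nonneg (mul_nonneg (mul_nonneg (by linarith : (0:ℝ) ≤ s) (by linarith : (0:ℝ) ≤ s)) (by linarith : (0:ℝ) ≤ s)) hσ1, sq_nonneg (s*s-1)]

lemma aux_sum (hs8 : 8 ≤ s) (ht : -(1/8:ℝ) ≤ t) (hσ1 : 0 ≤ σx) :
    ((s*s-1)^2*(1-t) - (s*s)*(s*σx+1)) + (2*(s*σx+1) - 1 + t) ≤ 2*(s*s-1)^2 - s*s := by
  have hu : (64:ℝ) ≤ s*s := by nlinarith
  have hA1 : (1:ℝ) ≤ (s*s-1)^2 := by nlinarith [mul_nonneg (by nlinarith : (0:ℝ) ≤ s*s) (by nlinarith : (0:ℝ) ≤ s*s - 2)]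
  have h3 : (2 - s*s)*(s*σx+1) ≤ (2 - s*s)*1 := by
    apply mul_le_mul_of_nonpos_left (by nlinarith [mul_nonneg (by linarith : (0:ℝ) ≤ s) hσ1]) (by nlinarith)
  have h4 : 0 ≤ ((s*s-1)^2 - 1) * (1 + t) :=
    mul_nonneg (by linarith) (by linarith)
  nlinarith [h3, h4]
end aux

/-- There is an integer `k₀ ≥ 3` such that for every `k ≥ k₀` and every `x`,
the numbers `p₀^{(k)}(x)`, `p₂^{(k)}(x)`, `p_k^{(k)}(x)` all lie in `[0, 1]`;
in particular they form a probability distribution (on 0, 2 and k children). -/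
theorem stmt_14 (b σ : ℝ → ℝ)
    (hb : ∃ C, ∀ x, |b x| ≤ C) (hσbd : ∃ C, ∀ x, σ x ≤ C)
    (hσ : ∀ x, 0 ≤ σ x)
    (σk p2 pk p0 : ℕ → ℝ → ℝ)
    (hσk : ∀ k : ℕ, 3 ≤ k → ∀ x, σk k x = Real.sqrt k * σ x + 1)
    (hp2 : ∀ k : ℕ, 3 ≤ k → ∀ x, p2 k x =
      (((k : ℝ) - 1) ^ 2 * (1 - b x / Real.sqrt k) - k * σk k x) /
        (2 * ((k : ℝ) - 1) ^ 2 - k))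
    (hpk : ∀ k : ℕ, 3 ≤ k → ∀ x, pk k x =
      (2 * σk k x - 1 + b x / Real.sqrt k) / (2 * ((k : ℝ) - 1) ^ 2 - k))
    (hp0 : ∀ k : ℕ, 3 ≤ k → ∀ x, p0 k x = 1 - p2 k x - pk k x) :
    ∃ k₀ : ℕ, 3 ≤ k₀ ∧ ∀ k : ℕ, k₀ ≤ k → ∀ x : ℝ,
      (p0 k x ∈ Set.Icc (0 : ℝ) 1 ∧ p2 k x ∈ Set.Icc (0 : ℝ) 1 ∧
        pk k x ∈ Set.Icc (0 : ℝ) 1) ∧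
      p0 k x + p2 k x + pk k x = 1 := by
  obtain ⟨C, hC⟩ := hb
  obtain ⟨C', hC'⟩ := hσbd
  have hC0 : 0 ≤ C := le_trans (abs_nonneg _) (hC 0)
  have hC'0 : 0 ≤ C' := le_trans (hσ 0) (hC' 0)
  refine ⟨max 3 (⌈(8*(C+C'+1))^2⌉₊ + 3), le_max_left _ _, ?_⟩
  intro k hk x
  have hk3 : 3 ≤ k := le_trans (le_max_left _ _) hk
  have hkceil : ⌈(8*(C+C'+1))^2⌉₊ ≤ k := by
    have := le_trans (le_max_right 3 (⌈(8*(C+C'+1))^2⌉₊ + 3)) hk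
    omega
  have hkM : (8*(C+C'+1))^2 ≤ (k:ℝ) := le_trans (Nat.le_ceil _) (Nat.cast_le.mpr hkceil)
  have hkpos : (0:ℝ) < k := by positivity
  set s := Real.sqrt (k:ℝ) with hsdef
  have hs0 : 0 < s := Real.sqrt_pos.mpr hkpos
  have hs2 : s * s = (k:ℝ) := Real.mul_self_sqrt (le_of_lt hkpos)
  have hsM : 8*(C+C'+1) ≤ s := by
    have h := Real.sqrt_le_sqrt hkM
    rwa [Real.sqrt_sq (by positivity)] at h
  set t : ℝ := b x / s with htdef
  have hts : t * s = b x := div_mul_cancel₀ _ hs0.ne'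
  have hbx := abs_le.mp (hC x)
  have hts1 : t * s ≤ C := by rw [hts]; exact hbx.2
  have hts2 : -C ≤ t * s := by rw [hts]; exact hbx.1
  have hσ1 : 0 ≤ σ x := hσ x
  have hσ2 : σ x ≤ C' := hC' x
  obtain ⟨hs8, htl, htu⟩ := aux_basic hC0 hC'0 hsM hts1 hts2
  have hsC' : 8*C'+8 ≤ s := by nlinarith
  have hD0 : (0:ℝ) < 2*(s*s-1)^2 - s*s := aux_D hs8
  have hNk0 := aux_Nk0 (σx := σ x) hs8 htl hσ1
  have hNkD := aux_NkD hs8 htu hσ2 hsC' hσ1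
  have hN20 := aux_N20 hs8 htu hσ2 hsC'
  have hN2D := aux_N2D hs8 htl hσ1
  have hsumD := aux_sum hs8 htl hσ1
  have ep2 : p2 k x = ((s*s-1)^2*(1-t) - (s*s)*(s*(σ x)+1)) / (2*(s*s-1)^2 - s*s) := by
    rw [hp2 k hk3 x, hσk k hk3 x, ← hsdef, ← hs2, htdef]
  have epk : pk k x = (2*(s*(σ x)+1) - 1 + t) / (2*(s*s-1)^2 - s*s) := by
    rw [hpk k hk3 x, hσk k hk3 x, ← hsdef, ← hs2, htdef]
  have hp2v : p2 k x ∈ Set.Icc (0:ℝ) 1 := by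
    rw [ep2]
    exact ⟨div_nonneg hN20 hD0.le, (div_le_one hD0).mpr hN2D⟩
  have hpkv : pk k x ∈ Set.Icc (0:ℝ) 1 := by
    rw [epk]
    exact ⟨div_nonneg hNk0 hD0.le, (div_le_one hD0).mpr hNkD⟩
  have hsum1 : p2 k x + pk k x ≤ 1 := by
    rw [ep2, epk, ← add_div]
    exact (div_le_one hD0).mpr hsumD
  have hp0v : p0 k x ∈ Set.Icc (0:ℝ) 1 := by
    rw [hp0 k hk3 x]
    exact ⟨by linarith, by linarith [hp2v.1, hpkv.1]⟩
  exact ⟨⟨hp0v, hp2v, hpkv⟩, by rw [hp0 k hk3 x]; ring⟩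
end
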